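/- Let B be a maximal computably enumerable set and let X, Y be disjoint computably enumerable sets with X ∪ Y = B such that neither X nor Y is computable. Then for every computably enumerable set W, the set W \ X is infinite if and only if the set W ∩ Y is infinite. -/

import Mathlib

/-- A set of naturals is computably enumerable if it is the domain of a partial
computable function. -/
def CEset (A : Set ℕ) : Prop := ∃ f : ℕ →. ℕ, Nat.Partrec f ∧ A = {x | (f x).Dom}

/-- A c.e. set `B` is maximal if its complement is infinite and for every c.e. set `W`,
either `W ∩ Bᶜ` is finite or `Bᶜ \ W` is finite. -/
def MaximalCE (B : Set ℕ) : Prop :=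
  CEset B ∧ Bᶜ.Infinite ∧ ∀ W : Set ℕ, CEset W → (W ∩ Bᶜ).Finite ∨ (Bᶜ \ W).Finite

lemma ceset_iff_re {A : Set ℕ} : CEset A ↔ REPred (· ∈ A) := by
  constructor
  · rintro ⟨f, hf, rfl⟩
    exact (Partrec.nat_iff.2 hf).dom_re
  · intro h
    refine ⟨fun a => (Part.assert (a ∈ A) fun _ => Part.some ()).map fun _ => 0,
      Partrec.nat_iff.1 (h.map (Computable.const 0).to₂), ?_⟩
    ext x
    simp [Part.assert]

lemma rePred_or {p q : ℕ → Prop} (hp : REPred p) (hq : REPred q) :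
    REPred fun x => p x ∨ q x := by
  obtain ⟨k, hk, K⟩ := Partrec.merge hp hq (fun a x _ y _ => Subsingleton.elim x y)
  refine hk.dom_re.of_eq fun a => ?_
  rw [Part.dom_iff_mem]
  constructor
  · rintro ⟨x, hx⟩
    rcases (K a x).1 hx with h | h
    · exact Or.inl ((Part.mem_assert_iff.1 h).1)
    · exact Or.inr ((Part.mem_assert_iff.1 h).1)
  · rintro (h | h)
    · exact ⟨(), (K a ()).2 (Or.inl (Part.mem_assert_iff.2 ⟨h, Part.mem_some ()⟩))⟩
    · exact ⟨(), (K a ()).2 (Or.inr (Part.mem_assert_iff.2 ⟨h, Part.mem_some ()⟩))⟩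

lemma rePred_and {p q : ℕ → Prop} (hp : REPred p) (hq : REPred q) :
    REPred fun x => p x ∧ q x := by
  have h : Partrec fun a => (Part.assert (p a) fun _ => Part.some ()).bind
      fun _ => Part.assert (q a) fun _ => Part.some () :=
    hp.bind ((hq.comp Computable.fst).to₂ : Partrec₂ fun a (_ : Unit) =>
      Part.assert (q a) fun _ => Part.some ())
  refine h.of_eq fun a => Part.ext fun u => ?_
  simp [Part.mem_assert_iff, Part.mem_bind_iff]

lemma primrecPred_mem_list (l : List ℕ) : PrimrecPred fun x => x ∈ l := by
  induction l with
  | nil => exact Primrec.primrecPred ((Primrec.const false).of_eq (fun x => by simp) : Primrec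
      fun x : ℕ => decide (x ∈ ([] : List ℕ)))
  | cons a l ih =>
      exact PrimrecPred.of_eq
        (((Primrec.eq.comp Primrec.id (Primrec.const a)).or ih))
        (fun x => by simp [List.mem_cons, eq_comm])

lemma computablePred_of_finite {S : Set ℕ} (hS : S.Finite) :
    ComputablePred (· ∈ S) := by
  have h := (primrecPred_mem_list hS.toFinset.toList).decide.to_comp
  exact ComputablePred.of_eq ⟨inferInstance, h⟩ (fun x => by simp)

lemma rePred_of_finite_diff {S T : Set ℕ} (hT : REPred (· ∈ T))
    (h1 : (T \ S).Finite) (h2 : (S \ T).Finite) : REPred (· ∈ S) := by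
  have hre : REPred fun x => (x ∈ T ∧ ¬ x ∈ T \ S) ∨ x ∈ S \ T :=
    rePred_or (rePred_and hT ((computablePred_of_finite h1).not.to_re))
      ((computablePred_of_finite h2).to_re)
  refine hre.of_eq fun x => ?_
  constructor
  · rintro (⟨ht, hn⟩ | ⟨hs, _⟩)
    · by_contra hs
      exact hn ⟨ht, hs⟩
    · exact hs
  · intro hs
    by_cases ht : x ∈ T
    · exact Or.inl ⟨ht, fun hd => hd.2 hs⟩
    · exact Or.inr ⟨hs, ht⟩

/-- If `B` is a maximal c.e. set split into disjoint c.e. sets `X`, `Y`, neither of which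
is computable, then for every c.e. `W`, `W \ X` is infinite iff `W ∩ Y` is infinite. -/
theorem maximal_split_diff_infinite_iff_inter_infinite
    (B X Y : Set ℕ) (hB : MaximalCE B) (hX : CEset X) (hY : CEset Y)
    (hdisj : Disjoint X Y) (hunion : X ∪ Y = B)
    (hXnc : ¬ ComputablePred (· ∈ X)) (hYnc : ¬ ComputablePred (· ∈ Y)) :
    ∀ W : Set ℕ, CEset W → ((W \ X).Infinite ↔ (W ∩ Y).Infinite) := by
  intro W hW
  obtain ⟨hBce, hBcinf, hmax⟩ := hB
  have key : W \ X = (W ∩ Y) ∪ (W ∩ Bᶜ) := by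
    ext x
    constructor
    · rintro ⟨hw, hx⟩
      by_cases hb : x ∈ B
      · rw [← hunion] at hb
        rcases hb with h | h
        · exact absurd h hx
        · exact Or.inl ⟨hw, h⟩
      · exact Or.inr ⟨hw, hb⟩
    · rintro (⟨hw, hy⟩ | ⟨hw, hb⟩)
      · exact ⟨hw, fun hx => Set.disjoint_left.1 hdisj hx hy⟩
      · exact ⟨hw, fun hx => hb (hunion ▸ Set.mem_union_left _ hx)⟩
  constructor
  · intro hinf
    by_contra hfin
    rw [Set.not_infinite] at hfin
    rcases hmax W hW with hc | hc
    · exact hinf (key ▸ hfin.union hc)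
    · -- `Bᶜ \ W` finite: then `Yᶜ` differs finitely from the c.e. set `X ∪ W`,
      -- so `Y` would be computable, contradiction.
      apply hYnc
      rw [ComputablePred.computable_iff_re_compl_re']
      refine ⟨ceset_iff_re.1 hY, ?_⟩
      have hXW : REPred (· ∈ X ∪ W) :=
        (rePred_or (ceset_iff_re.1 hX) (ceset_iff_re.1 hW)).of_eq fun x => by simp
      have h1 : ((X ∪ W) \ Yᶜ).Finite := by
        refine hfin.subset ?_
        rintro x ⟨hxw, hy⟩
        rw [Set.notMem_compl_iff] at hy
        rcases hxw with h | h
        · exact absurd h (Set.disjoint_right.1 hdisj hy)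
        · exact ⟨h, hy⟩
      have h2 : (Yᶜ \ (X ∪ W)).Finite := by
        refine hc.subset ?_
        rintro x ⟨hy, hxw⟩
        rw [Set.mem_compl_iff] at hy
        refine ⟨fun hb => ?_, fun hw => hxw (Or.inr hw)⟩
        rw [← hunion] at hb
        rcases hb with h | h
        · exact hxw (Or.inl h)
        · exact hy h
      exact (rePred_of_finite_diff hXW h1 h2).of_eq fun x => by simp
  · intro hinf
    rw [key]
    exact hinf.mono Set.subset_union_left
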